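/- Let q be a prime power, let m > 1 be an integer with smallest prime divisor m₁. Suppose there exist α ∈ 𝓕_m(q) and c₁, …, c_{m₁−1} ∈ F_q such that α^{m₁} + Σ_{i=1}^{m₁−1} c_i α^i ∈ 𝓕_{m/m₁}(q). Then there exists a monic irreducible polynomial f(x) ∈ F_{q^{m/m₁}}[x] of degree m₁ such that f(x) − f(0) has all its coefficients in F_q and f(0) ∈ 𝓕_{m/m₁}(q). -/

import Mathlib

open Polynomial

/-- `Fcal q m` is the set `𝓕_m(q)` of elements generating `𝔽_{q^m}` over `𝔽_q`. -/
def Fcal (q m : ℕ) {K : Type*} [Monoid K] : Set K :=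
  {α | α ^ q ^ m = α ∧ ∀ l : ℕ, 0 < l → α ^ q ^ l = α → m ∣ l}

/-- (Proposition, (iii) ⟹ (iv).)  If there are `α ∈ 𝓕_m(q)` and
`c₁, …, c_{m₁-1} ∈ 𝔽_q` with `α^{m₁} + Σ c_i α^i ∈ 𝓕_{m/m₁}(q)`, then there is a monic
irreducible `f ∈ 𝔽_{q^{m/m₁}}[x]` of degree `m₁` with `f - f(0)` having coefficients
in `𝔽_q` and `f(0) ∈ 𝓕_{m/m₁}(q)`.  Here `𝔽_{q^{m/m₁}}` is realized as the fixed field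
of the cyclic group generated by `σ^{m/m₁}` inside the algebraic closure. -/
theorem stmt_15 {F : Type*} [Field F] [Fintype F] (q : ℕ) (hq : Fintype.card F = q)
    (σ : AlgebraicClosure F ≃ₐ[F] AlgebraicClosure F) (hσ : ∀ x, σ x = x ^ q)
    (m m₁ : ℕ) (hm : 1 < m) (hm₁ : m₁ = m.minFac)
    (α : AlgebraicClosure F) (hα : α ∈ (Fcal q m : Set (AlgebraicClosure F)))
    (c : ℕ → F)
    (hc : α ^ m₁ + ∑ i ∈ Finset.Ico 1 m₁, algebraMap F (AlgebraicClosure F) (c i) * α ^ i ∈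
      (Fcal q (m / m₁) : Set (AlgebraicClosure F))) :
    ∃ f : Polynomial
        (IntermediateField.fixedField (Subgroup.zpowers (σ ^ (m / m₁)))),
      f.Monic ∧ Irreducible f ∧ f.natDegree = m₁ ∧
      (∀ i : ℕ, ∃ a : F,
        (((f - Polynomial.C (f.eval 0)).coeff i : _) : AlgebraicClosure F) =
          algebraMap F (AlgebraicClosure F) a) ∧
      ((f.eval 0 : _) : AlgebraicClosure F) ∈
        (Fcal q (m / m₁) : Set (AlgebraicClosure F)) := by
  set n := m / m₁ with hn
  set K := IntermediateField.fixedField (Subgroup.zpowers (σ ^ n)) with hK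
  set β : (AlgebraicClosure F) := α ^ m₁ + ∑ i ∈ Finset.Ico 1 m₁, algebraMap F (AlgebraicClosure F) (c i) * α ^ i with hβ
  -- basic numerology
  have hm1prime : Nat.Prime m₁ := hm₁ ▸ Nat.minFac_prime (by omega)
  have hm1pos : 0 < m₁ := hm1prime.pos
  have hm1two : 2 ≤ m₁ := hm1prime.two_le
  have hdvd : m₁ ∣ m := hm₁ ▸ Nat.minFac_dvd m
  have hmeq : m₁ * n = m := Nat.mul_div_cancel' hdvd
  have hnpos : 0 < n := Nat.div_pos (Nat.le_of_dvd (by omega) hdvd) hm1pos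
  -- Frobenius powers
  have hσpow : ∀ (k : ℕ) (x : (AlgebraicClosure F)), (σ ^ k) x = x ^ q ^ k := by
    intro k
    induction k with
    | zero => intro x; simp
    | succ k ih =>
      intro x
      rw [pow_succ, AlgEquiv.mul_apply, hσ, ih, ← pow_mul, ← pow_succ']
  -- membership in K from being fixed by σ^n
  have memK : ∀ x : (AlgebraicClosure F), x ^ q ^ n = x → x ∈ K := by
    intro x hx
    have hfix : (σ ^ n) x = x := by rw [hσpow]; exact hx
    intro g
    obtain ⟨z, hz⟩ := g.2
    have hzall : ∀ z : ℤ, ((σ ^ n) ^ z) x = x := by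
      intro z
      induction z using Int.induction_on with
      | zero => simp
      | succ k ih =>
        rw [zpow_add_one, AlgEquiv.mul_apply, hfix, ih]
      | pred k ih =>
        rw [zpow_sub_one, AlgEquiv.mul_apply]
        have h2 : (σ ^ n)⁻¹ x = x := by
          conv_lhs => rw [← hfix]
          rw [← AlgEquiv.mul_apply, inv_mul_cancel, AlgEquiv.one_apply]
        rw [h2, ih]
    have hz' : (σ ^ n) ^ z = (g : (AlgebraicClosure F) ≃ₐ[F] (AlgebraicClosure F)) := hz
    have := hzall z
    rw [hz'] at this
    exact this
  have hβK : β ∈ K := memK β hc.1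
  set βK : K := ⟨β, hβK⟩ with hβK'
  set ι := algebraMap F K with hι
  set P : F[X] := X ^ m₁ + ∑ i ∈ Finset.Ico 1 m₁, C (c i) * X ^ i with hP
  have hsum : (∑ i ∈ Finset.Ico 1 m₁, (C (c i) * X ^ i : F[X])).degree < (m₁ : ℕ) := by
    apply lt_of_le_of_lt (Polynomial.degree_sum_le _ _)
    rw [Finset.sup_lt_iff (by exact_mod_cast WithBot.bot_lt_coe m₁)]
    intro i hi
    exact lt_of_le_of_lt (Polynomial.degree_C_mul_X_pow_le _ _)
      (by exact_mod_cast (Finset.mem_Ico.mp hi).2)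
  have hPmonic : P.Monic := by
    rw [hP]
    exact (Polynomial.monic_X_pow m₁).add_of_left (by rwa [degree_X_pow])
  have hPdeg : P.natDegree = m₁ := by
    apply Polynomial.natDegree_eq_of_degree_eq_some
    rw [hP, Polynomial.degree_add_eq_left_of_degree_lt (by rwa [degree_X_pow]), degree_X_pow]
  set g : K[X] := P.map ι - C βK with hg
  have hgmonic : g.Monic := by
    rw [hg, sub_eq_add_neg, ← C_neg]
    refine (hPmonic.map ι).add_of_left ?_
    apply lt_of_le_of_lt (degree_C_le)
    rw [Polynomial.degree_eq_natDegree (hPmonic.map ι).ne_zero, hPmonic.natDegree_map, hPdeg]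
    exact_mod_cast hm1pos
  have hCdeg : (C βK).degree < (P.map ι).degree := by
    apply lt_of_le_of_lt (degree_C_le)
    rw [Polynomial.degree_eq_natDegree (hPmonic.map ι).ne_zero, hPmonic.natDegree_map, hPdeg]
    exact_mod_cast hm1pos
  have hgdeg : g.natDegree = m₁ := by
    rw [hg]
    rw [Polynomial.natDegree_sub_eq_left_of_natDegree_lt, hPmonic.natDegree_map, hPdeg]
    rw [Polynomial.natDegree_C, hPmonic.natDegree_map, hPdeg]
    exact hm1pos
  have hroot : Polynomial.aeval α g = 0 := by
    rw [hg, map_sub, Polynomial.aeval_map_algebraMap, Polynomial.aeval_C]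
    have h1 : Polynomial.aeval α P = β := by
      rw [hP, hβ]
      simp only [map_add, map_sum, map_mul, map_pow, Polynomial.aeval_C, Polynomial.aeval_X]
    have h2 : algebraMap K (AlgebraicClosure F) βK = β := rfl
    rw [h1, h2, sub_self]
  classical
  have hint : IsIntegral K α := ⟨g, hgmonic, by rwa [← Polynomial.aeval_def]⟩
  have hμdvd : minpoly K α ∣ g := minpoly.dvd K α hroot
  have hdle : (minpoly K α).natDegree ≤ m₁ := by
    have := Polynomial.natDegree_le_of_dvd hμdvd hgmonic.ne_zero
    rwa [hgdeg] at this
  -- σ^n as a K-algebra hom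
  have hτK : ∀ x : K, (σ ^ n) (x : AlgebraicClosure F) = x :=
    fun x => x.2 ⟨σ ^ n, Subgroup.mem_zpowers _⟩
  let ψ : AlgebraicClosure F →ₐ[K] AlgebraicClosure F :=
    { toRingHom := (σ ^ n : AlgebraicClosure F ≃ₐ[F] AlgebraicClosure F).toRingEquiv.toRingHom,
      commutes' := hτK }
  have hrootpow : ∀ γ : AlgebraicClosure F, Polynomial.aeval γ (minpoly K α) = 0 →
      Polynomial.aeval (γ ^ q ^ n) (minpoly K α) = 0 := by
    intro γ hγ
    have h3 := Polynomial.aeval_algHom_apply ψ γ (minpoly K α)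
    rw [hγ, map_zero] at h3
    have hψγ : ψ γ = γ ^ q ^ n := hσpow n γ
    rwa [hψγ] at h3
  have hiter : ∀ j : ℕ, Polynomial.aeval (α ^ q ^ (n * j)) (minpoly K α) = 0 := by
    intro j; induction j with
    | zero => simpa using minpoly.aeval K α
    | succ j ih =>
      have h4 := hrootpow _ ih
      rwa [← pow_mul, ← pow_add, ← Nat.mul_succ] at h4
  -- pigeonhole among roots
  set μ' := (minpoly K α).map (algebraMap K (AlgebraicClosure F)) with hμ'
  have hμ'ne : μ' ≠ 0 :=
    Polynomial.map_ne_zero (minpoly.ne_zero hint)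
  have hroots : ∀ j : ℕ, α ^ q ^ (n * j) ∈ μ'.roots.toFinset := by
    intro j
    rw [Multiset.mem_toFinset, Polynomial.mem_roots hμ'ne, Polynomial.IsRoot.def, hμ',
      Polynomial.eval_map, ← Polynomial.aeval_def]
    exact hiter j
  have hcard : μ'.roots.toFinset.card < (Finset.range ((minpoly K α).natDegree + 1)).card := by
    rw [Finset.card_range]
    have h5 : μ'.roots.toFinset.card ≤ μ'.natDegree :=
      le_trans (Multiset.toFinset_card_le _) (Polynomial.card_roots' μ')
    have hnd : μ'.natDegree = (minpoly K α).natDegree := by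
      rw [hμ', (minpoly.monic hint).natDegree_map]
    omega
  obtain ⟨i, hi, j, hj, hij, heq⟩ :=
    Finset.exists_ne_map_eq_of_card_lt_of_maps_to hcard (fun j _ => hroots j)
  have hstep : ∀ i j : ℕ, i < j → α ^ q ^ (n * i) = α ^ q ^ (n * j) →
      α ^ q ^ (n * (j - i)) = α := by
    intro i j hlt he
    apply (σ ^ (n * i)).injective
    rw [hσpow, hσpow, ← pow_mul, ← pow_add, ← Nat.mul_add, Nat.sub_add_cancel hlt.le]
    exact he.symm
  have hkey : ∃ k : ℕ, 0 < k ∧ k ≤ (minpoly K α).natDegree ∧ α ^ q ^ (n * k) = α := by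
    rw [Finset.mem_range] at hi hj
    rcases Nat.lt_or_ge i j with h | h
    · exact ⟨j - i, by omega, by omega, hstep i j h heq⟩
    · have h' : j < i := by omega
      exact ⟨i - j, by omega, by omega, hstep j i h' heq.symm⟩
  have hdge : m₁ ≤ (minpoly K α).natDegree := by
    obtain ⟨k, hk0, hkd, hke⟩ := hkey
    have hdvd2 : m ∣ n * k := hα.2 (n * k) (by positivity) hke
    have hdvd3 : m₁ ∣ k := by
      obtain ⟨t, ht⟩ := hdvd2
      rw [← hmeq] at ht
      have : k = m₁ * t := by
        have := Nat.eq_of_mul_eq_mul_left hnpos (by linarith [ht] : n * k = n * (m₁ * t))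
        omega
      exact ⟨t, this⟩
    exact le_trans (Nat.le_of_dvd hk0 hdvd3) hkd
  have hdeq : (minpoly K α).natDegree = m₁ := le_antisymm hdle hdge
  -- g equals the minimal polynomial, hence irreducible
  have hgμ : g = minpoly K α := by
    obtain ⟨h, hh⟩ := hμdvd
    have hμne : minpoly K α ≠ 0 := minpoly.ne_zero hint
    have hhne : h ≠ 0 := by rintro rfl; rw [mul_zero] at hh; exact hgmonic.ne_zero hh
    have hhdeg : h.natDegree = 0 := by
      have h6 := Polynomial.natDegree_mul hμne hhne
      rw [← hh, hgdeg, hdeq] at h6; omega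
    have hhC : h = C (h.coeff 0) := Polynomial.eq_C_of_natDegree_eq_zero hhdeg
    have hlc : h.coeff 0 = 1 := by
      have h7 : g.leadingCoeff = (minpoly K α).leadingCoeff * h.leadingCoeff := by
        rw [hh, Polynomial.leadingCoeff_mul]
      rw [hgmonic.leadingCoeff, (minpoly.monic hint).leadingCoeff, one_mul] at h7
      rw [Polynomial.leadingCoeff, hhdeg] at h7
      exact h7.symm
    rw [hh, hhC, hlc, map_one, mul_one]
  have hP0 : P.coeff 0 = 0 := by
    rw [hP, Polynomial.coeff_add, Polynomial.coeff_X_pow, if_neg (by omega),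
      Polynomial.finset_sum_coeff, Finset.sum_eq_zero, add_zero]
    intro i hi
    rw [Polynomial.coeff_C_mul, Polynomial.coeff_X_pow,
      if_neg (by have := (Finset.mem_Ico.mp hi).1; omega), mul_zero]
  have hg0 : g.eval 0 = -βK := by
    rw [hg, Polynomial.eval_sub, Polynomial.eval_C, Polynomial.eval_map,
      Polynomial.eval₂_at_zero, hP0, map_zero, zero_sub]
  have hgsub : g - C (g.eval 0) = P.map ι := by
    rw [hg0, map_neg, sub_neg_eq_add, hg, sub_add_cancel]
  refine ⟨g, hgmonic, hgμ ▸ minpoly.irreducible hint, hgdeg, ?_, ?_⟩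
  · intro i
    refine ⟨P.coeff i, ?_⟩
    rw [hgsub, Polynomial.coeff_map, hι]
    exact ((IsScalarTower.algebraMap_apply F K (AlgebraicClosure F) (P.coeff i))).symm
  · rw [hg0]
    have hcoe : ((-βK : K) : AlgebraicClosure F) = -β := by
      rw [hβK']; simp
    refine ⟨?_, ?_⟩
    · rw [hcoe, ← hσpow, map_neg, hσpow, hc.1]
    · intro l hl hpow
      rw [hcoe] at hpow
      have h2 : (-β) ^ q ^ l = -(β ^ q ^ l) := by rw [← hσpow, map_neg, hσpow]
      rw [h2, neg_inj] at hpow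
      exact hc.2 l hl hpow
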